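/- Define a_j = (j!/2)^{1/(j-2)} for integers j ≥ 3. Then the sequence a_j/√j is nondecreasing: for all integers n ≥ j ≥ 3, a_j/√j ≤ a_n/√n. -/

import Mathlib

open Real

lemma nat_ineq (k : ℕ) :
    ((Nat.factorial (k+3) : ℝ))^2 * ((k:ℝ)+4)^((k+1)*k) ≤ 4 * ((k:ℝ)+3)^((k+1)*(k+2)) := by
  induction k with
  | zero => norm_num [Nat.factorial]
  | succ k ih =>
    have hpos : (0:ℝ) < (k:ℝ)+4 := by positivity
    have hfac : ((Nat.factorial (k+1+3) : ℝ)) = ((k:ℝ)+4) * (Nat.factorial (k+3) : ℝ) := by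
      rw [show k+1+3 = (k+3)+1 by ring, Nat.factorial_succ]
      push_cast; ring
    -- goal after casts: ((k+4)!)^2 * (k+5)^((k+2)*(k+1)) ≤ 4 * (k+4)^((k+2)*(k+3))
    have key : ((k:ℝ)+3)*((k:ℝ)+5) ≤ ((k:ℝ)+4)^2 := by nlinarith
    have key' : (((k:ℝ)+3)*((k:ℝ)+5))^((k+1)*(k+2)) ≤ (((k:ℝ)+4)^2)^((k+1)*(k+2)) :=
      pow_le_pow_left₀ (by positivity) key _
    have hmul : (0:ℝ) < ((k:ℝ)+4)^((k+1)*k) := by positivity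
    rw [← mul_le_mul_iff_of_pos_right hmul]
    push_cast [hfac]
    rw [show ((k:ℝ)+1+4) = (k:ℝ)+5 from by ring, show ((k:ℝ)+1+3) = (k:ℝ)+4 from by ring]
    calc (((k:ℝ)+4) * (Nat.factorial (k+3) : ℝ))^2 * ((k:ℝ)+5)^((k+1+1)*(k+1)) * ((k:ℝ)+4)^((k+1)*k)
        = ((Nat.factorial (k+3) : ℝ))^2 * ((k:ℝ)+4)^((k+1)*k) * (((k:ℝ)+4)^2 * ((k:ℝ)+5)^((k+1)*(k+2))) := by
          rw [show (k+1+1)*(k+1) = (k+1)*(k+2) by ring]; ring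
      _ ≤ (4 * ((k:ℝ)+3)^((k+1)*(k+2))) * (((k:ℝ)+4)^2 * ((k:ℝ)+5)^((k+1)*(k+2))) := by
          apply mul_le_mul_of_nonneg_right ih; positivity
      _ = 4 * ((k:ℝ)+4)^2 * (((k:ℝ)+3)*((k:ℝ)+5))^((k+1)*(k+2)) := by
          rw [mul_pow]; ring
      _ ≤ 4 * ((k:ℝ)+4)^2 * (((k:ℝ)+4)^2)^((k+1)*(k+2)) := by
          apply mul_le_mul_of_nonneg_left key'; positivity
      _ = 4 * ((k:ℝ)+4)^((k+1+1)*(k+1+2)) * ((k:ℝ)+4)^((k+1)*k) := by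
          rw [← pow_mul, mul_assoc, mul_assoc, ← pow_add,
            show 2 + 2*((k+1)*(k+2)) = (k+1+1)*(k+1+2) + (k+1)*k from by ring, pow_add]

lemma aj_step (j : ℕ) (hj : 3 ≤ j) :
    ((Nat.factorial j : ℝ) / 2) ^ ((1 : ℝ) / ((j : ℝ) - 2)) / Real.sqrt j ≤
      ((Nat.factorial (j+1) : ℝ) / 2) ^ ((1 : ℝ) / (((j+1 : ℕ) : ℝ) - 2)) / Real.sqrt (j+1 : ℕ) := by
  obtain ⟨k, rfl⟩ : ∃ k, j = k + 3 := ⟨j - 3, by omega⟩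
  set A := Real.log (Nat.factorial (k+3) : ℝ) with hA
  set B := Real.log ((k:ℝ)+3) with hB
  set C := Real.log ((k:ℝ)+4) with hC
  set T := Real.log 2 with hT
  have hfacpos : (0:ℝ) < (Nat.factorial (k+3) : ℝ) := by positivity
  have hfac' : ((Nat.factorial (k+3+1) : ℝ)) = ((k:ℝ)+4) * (Nat.factorial (k+3) : ℝ) := by
    rw [Nat.factorial_succ]; push_cast; ring
  -- log of nat_ineq
  have hlog := Real.log_le_log (by positivity) (nat_ineq k)
  rw [Real.log_mul (by positivity) (by positivity),
      Real.log_mul (by positivity) (by positivity),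
      Real.log_pow, Real.log_pow, Real.log_pow] at hlog
  have hlog4 : Real.log (4:ℝ) = 2 * T := by
    rw [hT, show (4:ℝ) = 2^2 from by norm_num, Real.log_pow]; push_cast; ring
  rw [hlog4] at hlog
  push_cast at hlog
  -- hlog : 2*A + ((k+1)*k)*C ≤ 2*T + ((k+1)*(k+2))*B
  have h1 : (0:ℝ) < (k:ℝ)+1 := by positivity
  have h2 : (0:ℝ) < (k:ℝ)+2 := by positivity
  have key : (A - T) / ((k:ℝ)+1) - B/2 ≤ (A + C - T)/((k:ℝ)+2) - C/2 := by
    rw [div_sub_div _ _ (ne_of_gt h1) two_ne_zero, div_sub_div _ _ (ne_of_gt h2) two_ne_zero,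
      div_le_div_iff₀ (by positivity) (by positivity)]
    nlinarith [hlog]
  have hx : (0:ℝ) < (Nat.factorial (k+3) : ℝ) / 2 := by positivity
  have hx' : (0:ℝ) < (Nat.factorial (k+3+1) : ℝ) / 2 := by positivity
  have hlx : Real.log ((Nat.factorial (k+3) : ℝ) / 2) = A - T :=
    Real.log_div (ne_of_gt hfacpos) two_ne_zero
  have hlx' : Real.log ((Nat.factorial (k+3+1) : ℝ) / 2) = A + C - T := by
    rw [Real.log_div (by positivity) two_ne_zero, hfac',
      Real.log_mul (by positivity) (ne_of_gt hfacpos)]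
    ring
  have hc1 : ((k+3 : ℕ) : ℝ) = (k:ℝ)+3 := by push_cast; ring
  have hc2 : ((k+3+1 : ℕ) : ℝ) = (k:ℝ)+4 := by push_cast; ring
  rw [hc1, hc2, Real.sqrt_eq_rpow, Real.sqrt_eq_rpow,
    Real.rpow_def_of_pos hx, Real.rpow_def_of_pos hx',
    Real.rpow_def_of_pos (by positivity : (0:ℝ) < (k:ℝ)+3),
    Real.rpow_def_of_pos (by positivity : (0:ℝ) < (k:ℝ)+4),
    ← Real.exp_sub, ← Real.exp_sub, Real.exp_le_exp, hlx, hlx']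
  have e1 : ((k:ℝ)+3) - 2 = (k:ℝ)+1 := by ring
  have e2 : ((k:ℝ)+4) - 2 = (k:ℝ)+2 := by ring
  rw [e1, e2]
  calc (A - T) * (1/((k:ℝ)+1)) - B * (1/2)
      = (A - T)/((k:ℝ)+1) - B/2 := by ring
    _ ≤ (A + C - T)/((k:ℝ)+2) - C/2 := key
    _ = (A + C - T) * (1/((k:ℝ)+2)) - C * (1/2) := by ring

theorem aj_div_sqrt_monotone (n j : ℕ) (hj : 3 ≤ j) (hjn : j ≤ n) :
    ((Nat.factorial j : ℝ) / 2) ^ ((1 : ℝ) / ((j : ℝ) - 2)) / Real.sqrt j ≤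
      ((Nat.factorial n : ℝ) / 2) ^ ((1 : ℝ) / ((n : ℝ) - 2)) / Real.sqrt n := by
  induction n, hjn using Nat.le_induction with
  | base => exact le_refl _
  | succ n hn ih => exact ih.trans (aj_step n (hj.trans hn))
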